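/- arXiv:2510.19431 — 3 statements merged into one kernel-verified Lean document; each statement's English description precedes it below -/
import Mathlib

section
/- If x : ν → ℝ^d satisfies Δ_{η,κ,α} x = 0, where (Δx)_i = −Σ_j (κ_{ij}/Z_i)(α_{ij} x_j − x_i), then x_i = α_{ij} x_j for every edge i ∼ j with κ_{ij} > 0. -/
open Matrix

/-- The gauged Laplacian `(Δ x)_i = −Σ_j (κ_{ij}/Z_i)(α_{ij} x_j − x_i)`,
with `Z_i = Σ_j κ_{ij}`. -/
noncomputable def gaugedLap {ν : Type*} [Fintype ν] (d : ℕ)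
    (κ : ν → ν → ℝ) (α : ν → ν → Matrix (Fin d) (Fin d) ℝ)
    (x : ν → Fin d → ℝ) : ν → Fin d → ℝ :=
  fun i => -∑ j, (κ i j / ∑ k, κ i k) • ((α i j).mulVec (x j) - x i)

/-- If `Δ_{η,κ,α} x = 0` then `x_i = α_{ij} x_j` on every edge
(`κ_{ij} > 0`). -/
theorem stmt7 {ν : Type*} [Fintype ν] (d : ℕ)
    (κ : ν → ν → ℝ)
    (hκsym : ∀ i j, κ i j = κ j i)
    (hκnn : ∀ i j, 0 ≤ κ i j)
    (hZ : ∀ i, 0 < ∑ j, κ i j)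
    (α : ν → ν → Matrix (Fin d) (Fin d) ℝ)
    (hortho : ∀ i j, α i j * (α i j)ᵀ = 1)
    (hdet : ∀ i j, (α i j).det = 1)
    (hinv : ∀ i j, α j i = (α i j)ᵀ)
    (x : ν → Fin d → ℝ)
    (hker : gaugedLap d κ α x = 0) :
    ∀ i j, 0 < κ i j → x i = (α i j).mulVec (x j) := by

  classical
  -- Step 1: the unnormalized kernel equation at each vertex.
  have key : ∀ p, ∑ q, κ p q • ((α p q).mulVec (x q) - x p) = (0 : Fin d → ℝ) := by
    intro p
    have h0 : ∑ q, (κ p q / ∑ k, κ p k) • ((α p q).mulVec (x q) - x p) = 0 := by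
      have h := congrFun hker p
      simp only [gaugedLap, Pi.zero_apply] at h
      simpa [neg_eq_zero] using h
    have hZ' : (∑ k, κ p k) ≠ 0 := (hZ p).ne'
    calc ∑ q, κ p q • ((α p q).mulVec (x q) - x p)
        = (∑ k, κ p k) • ∑ q, (κ p q / ∑ k, κ p k) • ((α p q).mulVec (x q) - x p) := by
          rw [Finset.smul_sum]
          refine Finset.sum_congr rfl fun q _ => ?_
          rw [smul_smul]
          congr 1
          field_simp
      _ = 0 := by rw [h0, smul_zero]
  -- Step 2: dot the kernel equation with x p.
  have sum_dot : ∀ (f : ν → Fin d → ℝ) (w : Fin d → ℝ),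
      (∑ q, f q) ⬝ᵥ w = ∑ q, f q ⬝ᵥ w := by
    intro f w
    simp only [dotProduct, Finset.sum_apply, Finset.sum_mul]
    rw [Finset.sum_comm]
  have hdot : ∀ p, ∑ q, κ p q * (((α p q).mulVec (x q) - x p) ⬝ᵥ x p) = 0 := by
    intro p
    have h := congrArg (fun v => v ⬝ᵥ x p) (key p)
    simp only [zero_dotProduct] at h
    rw [sum_dot] at h
    simpa [smul_dotProduct, smul_eq_mul] using h
  -- Orthogonality: A preserves the dot product of a vector with itself.
  have hAA : ∀ p q (v : Fin d → ℝ),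
      ((α p q).mulVec v) ⬝ᵥ ((α p q).mulVec v) = v ⬝ᵥ v := by
    intro p q v
    have h1 : (α p q)ᵀ * α p q = 1 := mul_eq_one_comm.mp (hortho p q)
    rw [Matrix.dotProduct_mulVec, ← Matrix.vecMul_transpose, Matrix.vecMul_vecMul, h1,
      Matrix.vecMul_one]
  -- Expansion of each energy term.
  have expand : ∀ p q,
      κ p q * ((x p - (α p q).mulVec (x q)) ⬝ᵥ (x p - (α p q).mulVec (x q)))
        = κ p q * (x q ⬝ᵥ x q) - κ p q * (x p ⬝ᵥ x p)
          - 2 * (κ p q * (((α p q).mulVec (x q) - x p) ⬝ᵥ x p)) := by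
    intro p q
    have hb := hAA p q (x q)
    simp only [sub_dotProduct, dotProduct_sub, hb,
      dotProduct_comm ((α p q).mulVec (x q)) (x p)]
    ring
  -- The total energy vanishes.
  have hS : ∑ p, ∑ q,
      κ p q * ((x p - (α p q).mulVec (x q)) ⬝ᵥ (x p - (α p q).mulVec (x q))) = 0 := by
    have h1 : ∀ p, ∑ q,
        κ p q * ((x p - (α p q).mulVec (x q)) ⬝ᵥ (x p - (α p q).mulVec (x q)))
          = ∑ q, κ p q * (x q ⬝ᵥ x q) - ∑ q, κ p q * (x p ⬝ᵥ x p) := by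
      intro p
      rw [Finset.sum_congr rfl fun q _ => expand p q]
      rw [Finset.sum_sub_distrib, Finset.sum_sub_distrib, ← Finset.mul_sum, hdot p,
        mul_zero, sub_zero]
    rw [Finset.sum_congr rfl fun p _ => h1 p, Finset.sum_sub_distrib]
    have h2 : ∑ p, ∑ q, κ p q * (x q ⬝ᵥ x q) = ∑ p, ∑ q, κ p q * (x p ⬝ᵥ x p) := by
      rw [Finset.sum_comm]
      exact Finset.sum_congr rfl fun p _ => Finset.sum_congr rfl fun q _ => by
        rw [hκsym]
    rw [h2, sub_self]
  -- Each term is nonnegative.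
  have hnn : ∀ p q, 0 ≤ κ p q *
      ((x p - (α p q).mulVec (x q)) ⬝ᵥ (x p - (α p q).mulVec (x q))) := by
    intro p q
    refine mul_nonneg (hκnn p q) (Finset.sum_nonneg fun k _ => mul_self_nonneg _)
  intro i j hij
  have houter := (Finset.sum_eq_zero_iff_of_nonneg
    (fun p _ => Finset.sum_nonneg fun q _ => hnn p q)).mp hS i (Finset.mem_univ i)
  have hterm := (Finset.sum_eq_zero_iff_of_nonneg
    (fun q _ => hnn i q)).mp houter j (Finset.mem_univ j)
  have hzero : (x i - (α i j).mulVec (x j)) ⬝ᵥ (x i - (α i j).mulVec (x j)) = 0 := by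
    rcases mul_eq_zero.mp hterm with h | h
    · exact absurd h hij.ne'
    · exact h
  have := dotProduct_self_eq_zero.mp hzero
  exact sub_eq_zero.mp this
end

section
/- Let η be a finite connected graph with spanning tree η₀ and let ε₁ be the set of edges of η not in η₀. Suppose the SO(d)-voltage α satisfies α_{ij} = I on all edges of η₀. Then the kernel of the gauged Laplacian Δ_{η,κ,α} is isomorphic to ℝ^d if ε₁ = ∅, and otherwise to the intersection over edges (i,j) ∈ ε₁ of the eigenspaces E₁(α_{ij}) of α_{ij} to eigenvalue 1; the isomorphism sends a kernel element x (which is a constant function x_i = x₀) to x₀. -/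
open Matrix

/-- The gauged Laplacian `(Δ x)_i = −Σ_j (κ_{ij}/Z_i)(α_{ij} x_j − x_i)`,
with `Z_i = Σ_j κ_{ij}`, as a linear operator on `ν → ℝ^d`. -/
noncomputable def gaugedLapL {ν : Type*} [Fintype ν] (d : ℕ)
    (κ : ν → ν → ℝ) (α : ν → ν → Matrix (Fin d) (Fin d) ℝ) :
    (ν → Fin d → ℝ) →ₗ[ℝ] (ν → Fin d → ℝ) where
  toFun x := fun i => -∑ j, (κ i j / ∑ k, κ i k) • ((α i j).mulVec (x j) - x i)
  map_add' x y := by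
    funext i
    simp only [Pi.add_apply, Matrix.mulVec_add]
    rw [← neg_add, ← Finset.sum_add_distrib]
    congr 1
    refine Finset.sum_congr rfl fun j _ => ?_
    rw [← smul_add]
    congr 1
    abel
  map_smul' c x := by
    funext i
    simp only [Pi.smul_apply, RingHom.id_apply]
    rw [smul_neg, Finset.smul_sum]
    congr 1
    refine Finset.sum_congr rfl fun j _ => ?_
    rw [Matrix.mulVec_smul, ← smul_sub, smul_comm]

/-- For a spanning tree `η₀` of a finite connected graph `η` and an
`SO(d)`-voltage `α` equal to the identity on all edges of `η₀`, the kernel of the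
gauged Laplacian is isomorphic to the intersection, over the edges `(i,j)` of `η`
not in `η₀`, of the eigenspaces `E₁(α_{ij})` (which is all of `ℝ^d` when there are
no such edges); the isomorphism sends a kernel element `x` (a constant function
`x_i = x₀`) to `x₀`. -/
theorem stmt11 {ν : Type*} [Fintype ν] (d : ℕ)
    (G : SimpleGraph ν) (hconn : G.Connected)
    (η₀ : SimpleGraph ν) (hsub : η₀ ≤ G) (htree : η₀.IsTree)
    (κ : ν → ν → ℝ)
    (hκsym : ∀ i j, κ i j = κ j i)
    (hκnn : ∀ i j, 0 ≤ κ i j)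
    (hsupp : ∀ i j, 0 < κ i j ↔ G.Adj i j)
    (α : ν → ν → Matrix (Fin d) (Fin d) ℝ)
    (hortho : ∀ i j, α i j * (α i j)ᵀ = 1)
    (hdet : ∀ i j, (α i j).det = 1)
    (hinv : ∀ i j, α j i = (α i j)ᵀ)
    (htreeId : ∀ i j, η₀.Adj i j → α i j = 1) :
    ∃ e : LinearMap.ker (gaugedLapL d κ α) ≃ₗ[ℝ]
        ((⨅ (p : ν × ν) (_ : G.Adj p.1 p.2 ∧ ¬ η₀.Adj p.1 p.2),
          Module.End.eigenspace (Matrix.mulVecLin (α p.1 p.2)) 1 :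
            Submodule ℝ (Fin d → ℝ))),
      ∀ (x : LinearMap.ker (gaugedLapL d κ α)) (i : ν),
        (e x : Fin d → ℝ) = (x : ν → Fin d → ℝ) i := by
  classical
  obtain ⟨i₀⟩ := hconn.nonempty
  -- basic dot product helpers
  have hdself : ∀ v : Fin d → ℝ, 0 ≤ v ⬝ᵥ v :=
    fun v => Finset.sum_nonneg fun k _ => mul_self_nonneg _
  have hdzero : ∀ v : Fin d → ℝ, v ⬝ᵥ v = 0 → v = 0 := by
    intro v hv
    funext k
    exact mul_self_eq_zero.mp
      ((Finset.sum_eq_zero_iff_of_nonneg (fun k _ => mul_self_nonneg (v k))).mp hv k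
        (Finset.mem_univ k))
  have hdsum : ∀ (v : Fin d → ℝ) (f : ν → Fin d → ℝ), v ⬝ᵥ (∑ j, f j) = ∑ j, v ⬝ᵥ f j := by
    intro v f
    simp only [dotProduct, Finset.sum_apply, Finset.mul_sum]
    rw [Finset.sum_comm]
  have hdotT : ∀ (M : Matrix (Fin d) (Fin d) ℝ) (u w : Fin d → ℝ),
      (M *ᵥ u) ⬝ᵥ w = u ⬝ᵥ (Mᵀ *ᵥ w) := by
    intro M u w
    rw [dotProduct_comm, Matrix.dotProduct_mulVec, ← Matrix.mulVec_transpose, dotProduct_comm]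
  have horth' : ∀ i j, (α i j)ᵀ * α i j = 1 := fun i j => mul_eq_one_comm.mp (hortho i j)
  have hnormpres : ∀ i j (u : Fin d → ℝ), ((α i j) *ᵥ u) ⬝ᵥ ((α i j) *ᵥ u) = u ⬝ᵥ u := by
    intro i j u
    rw [hdotT, Matrix.mulVec_mulVec, horth', Matrix.one_mulVec]
  -- Key lemma: kernel elements are "harmonic" along every edge
  have hA : ∀ x : ν → Fin d → ℝ, gaugedLapL d κ α x = 0 →
      ∀ i j, 0 < κ i j → (α i j) *ᵥ (x j) = x i := by
    intro x hx
    have h1 : ∀ i, ∑ j, κ i j • ((α i j) *ᵥ (x j) - x i) = 0 := by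
      intro i
      by_cases hz : (∑ k, κ i k) = 0
      · refine Finset.sum_eq_zero fun j _ => ?_
        have hj : κ i j = 0 :=
          (Finset.sum_eq_zero_iff_of_nonneg (fun k _ => hκnn i k)).mp hz j (Finset.mem_univ j)
        simp [hj]
      · have hxi : -∑ j, (κ i j / ∑ k, κ i k) • ((α i j) *ᵥ x j - x i) = (0 : Fin d → ℝ) :=
          congrFun hx i
        rw [neg_eq_zero] at hxi
        have h2 := congrArg (fun v => (∑ k, κ i k) • v) hxi
        simp only [smul_zero, Finset.smul_sum, smul_smul] at h2
        have heq : ∀ j, (∑ k, κ i k) * (κ i j / ∑ k, κ i k) = κ i j := by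
          intro j; field_simp
        simpa only [heq] using h2
    have h2 : ∀ i, ∑ j, κ i j * (x i ⬝ᵥ ((α i j) *ᵥ x j - x i)) = 0 := by
      intro i
      have h := congrArg (fun v => x i ⬝ᵥ v) (h1 i)
      simpa [hdsum, dotProduct_smul, smul_eq_mul, mul_sub] using h
    have h3 : ∑ i, ∑ j, κ i j * (((α i j) *ᵥ x j) ⬝ᵥ ((α i j) *ᵥ x j - x i)) = 0 := by
      have key : ∀ i j, κ i j * (((α i j) *ᵥ x j) ⬝ᵥ ((α i j) *ᵥ x j - x i))
          = -(κ j i * (x j ⬝ᵥ ((α j i) *ᵥ x i - x j))) := by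
        intro i j
        have e1 : ((α i j) *ᵥ x j) ⬝ᵥ ((α i j) *ᵥ x j - x i)
            = x j ⬝ᵥ x j - x j ⬝ᵥ ((α j i) *ᵥ x i) := by
          rw [dotProduct_sub, hnormpres, hdotT, ← hinv]
        have e2 : x j ⬝ᵥ ((α j i) *ᵥ x i - x j)
            = x j ⬝ᵥ ((α j i) *ᵥ x i) - x j ⬝ᵥ x j := by
          rw [dotProduct_sub]
        rw [e1, e2, hκsym i j]; ring
      have hcongr : ∑ i, ∑ j, κ i j * (((α i j) *ᵥ x j) ⬝ᵥ ((α i j) *ᵥ x j - x i))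
          = ∑ i, ∑ j, -(κ j i * (x j ⬝ᵥ ((α j i) *ᵥ x i - x j))) :=
        Finset.sum_congr rfl fun i _ => Finset.sum_congr rfl fun j _ => key i j
      rw [hcongr, Finset.sum_comm]
      refine Finset.sum_eq_zero fun j _ => ?_
      have : ∑ i, -(κ j i * (x j ⬝ᵥ ((α j i) *ᵥ x i - x j)))
          = -∑ i, κ j i * (x j ⬝ᵥ ((α j i) *ᵥ x i - x j)) := by
        rw [Finset.sum_neg_distrib]
      rw [this, h2 j, neg_zero]
    have h4 : ∑ i, ∑ j,
        κ i j * (((α i j) *ᵥ x j - x i) ⬝ᵥ ((α i j) *ᵥ x j - x i)) = 0 := by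
      have expand : ∀ i j,
          κ i j * (((α i j) *ᵥ x j - x i) ⬝ᵥ ((α i j) *ᵥ x j - x i))
          = κ i j * (((α i j) *ᵥ x j) ⬝ᵥ ((α i j) *ᵥ x j - x i))
            - κ i j * (x i ⬝ᵥ ((α i j) *ᵥ x j - x i)) := by
        intro i j
        rw [sub_dotProduct]; ring
      have hsum2 : ∑ i, ∑ j, κ i j * (x i ⬝ᵥ ((α i j) *ᵥ x j - x i)) = 0 :=
        Finset.sum_eq_zero fun i _ => h2 i
      calc ∑ i, ∑ j, κ i j * (((α i j) *ᵥ x j - x i) ⬝ᵥ ((α i j) *ᵥ x j - x i))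
          = ∑ i, ∑ j, (κ i j * (((α i j) *ᵥ x j) ⬝ᵥ ((α i j) *ᵥ x j - x i))
            - κ i j * (x i ⬝ᵥ ((α i j) *ᵥ x j - x i))) :=
            Finset.sum_congr rfl fun i _ => Finset.sum_congr rfl fun j _ => expand i j
        _ = 0 := by
            simp only [Finset.sum_sub_distrib]
            rw [h3, hsum2, sub_zero]
    intro i j hκ
    have inner0 : ∑ j', κ i j' * (((α i j') *ᵥ x j' - x i) ⬝ᵥ ((α i j') *ᵥ x j' - x i)) = 0 :=
      (Finset.sum_eq_zero_iff_of_nonneg (fun i _ => Finset.sum_nonneg fun j _ =>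
        mul_nonneg (hκnn _ _) (hdself _))).mp h4 i (Finset.mem_univ i)
    have term0 : κ i j * (((α i j) *ᵥ x j - x i) ⬝ᵥ ((α i j) *ᵥ x j - x i)) = 0 :=
      (Finset.sum_eq_zero_iff_of_nonneg (fun j _ =>
        mul_nonneg (hκnn _ _) (hdself _))).mp inner0 j (Finset.mem_univ j)
    have hyz : ((α i j) *ᵥ x j - x i) ⬝ᵥ ((α i j) *ᵥ x j - x i) = 0 := by
      rcases mul_eq_zero.mp term0 with h | h
      · exact absurd h (ne_of_gt hκ)
      · exact h
    exact sub_eq_zero.mp (hdzero _ hyz)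
  -- kernel elements are constant
  have hconst : ∀ x : ν → Fin d → ℝ, gaugedLapL d κ α x = 0 → ∀ i, x i = x i₀ := by
    intro x hx
    have key : ∀ i j, η₀.Adj i j → x j = x i := by
      intro i j h
      have hκp : 0 < κ i j := (hsupp i j).mpr (hsub h)
      have h' := hA x hx i j hκp
      rwa [htreeId i j h, Matrix.one_mulVec] at h'
    have walkEq : ∀ (i j : ν), η₀.Walk i j → x i = x j := by
      intro i j w
      induction w with
      | nil => rfl
      | cons hab p ih => exact ((key _ _ hab).symm).trans ih
    intro i
    obtain ⟨w⟩ := htree.isConnected.preconnected i i₀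
    exact walkEq i i₀ w
  -- membership in the eigenspace intersection
  have hSmem : ∀ v : Fin d → ℝ,
      v ∈ (⨅ (p : ν × ν) (_ : G.Adj p.1 p.2 ∧ ¬ η₀.Adj p.1 p.2),
        Module.End.eigenspace (Matrix.mulVecLin (α p.1 p.2)) 1 : Submodule ℝ (Fin d → ℝ))
      ↔ ∀ p : ν × ν, G.Adj p.1 p.2 ∧ ¬ η₀.Adj p.1 p.2 → (α p.1 p.2) *ᵥ v = v := by
    intro v
    simp only [Submodule.mem_iInf, Module.End.mem_eigenspace_iff, Matrix.mulVecLin_apply,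
      one_smul]
  -- constants with values in the intersection belong to the kernel
  have hkerC : ∀ v : Fin d → ℝ,
      (∀ p : ν × ν, G.Adj p.1 p.2 ∧ ¬ η₀.Adj p.1 p.2 → (α p.1 p.2) *ᵥ v = v) →
      gaugedLapL d κ α (fun _ => v) = 0 := by
    intro v hv
    funext i
    show (-∑ j, (κ i j / ∑ k, κ i k) • ((α i j) *ᵥ v - v)) = 0
    rw [neg_eq_zero]
    refine Finset.sum_eq_zero fun j _ => ?_
    rcases eq_or_lt_of_le (hκnn i j) with h0 | hpos
    · rw [← h0]; simp
    · by_cases ht : η₀.Adj i j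
      · rw [htreeId i j ht, Matrix.one_mulVec, sub_self, smul_zero]
      · rw [hv (i, j) ⟨(hsupp i j).mp hpos, ht⟩, sub_self, smul_zero]
  -- build the linear equivalence
  let f0 : LinearMap.ker (gaugedLapL d κ α) →ₗ[ℝ] (Fin d → ℝ) :=
    (LinearMap.proj i₀).comp (Submodule.subtype _)
  have hf0 : ∀ x : LinearMap.ker (gaugedLapL d κ α),
      f0 x ∈ (⨅ (p : ν × ν) (_ : G.Adj p.1 p.2 ∧ ¬ η₀.Adj p.1 p.2),
        Module.End.eigenspace (Matrix.mulVecLin (α p.1 p.2)) 1 : Submodule ℝ (Fin d → ℝ)) := by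
    intro x
    rw [hSmem]
    intro p hp
    have hκp : 0 < κ p.1 p.2 := (hsupp p.1 p.2).mpr hp.1
    have h := hA x.1 (LinearMap.mem_ker.mp x.2) p.1 p.2 hκp
    have hc := hconst x.1 (LinearMap.mem_ker.mp x.2)
    show (α p.1 p.2) *ᵥ (x.1 i₀) = x.1 i₀
    rw [hc p.2, hc p.1] at h
    exact h
  let f : LinearMap.ker (gaugedLapL d κ α) →ₗ[ℝ]
      (⨅ (p : ν × ν) (_ : G.Adj p.1 p.2 ∧ ¬ η₀.Adj p.1 p.2),
        Module.End.eigenspace (Matrix.mulVecLin (α p.1 p.2)) 1 : Submodule ℝ (Fin d → ℝ)) :=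
    LinearMap.codRestrict _ f0 hf0
  have hinj : Function.Injective f := by
    intro a b hab
    have h1 : a.1 i₀ = b.1 i₀ := congrArg Subtype.val hab
    apply Subtype.ext
    funext i
    rw [hconst a.1 (LinearMap.mem_ker.mp a.2) i, hconst b.1 (LinearMap.mem_ker.mp b.2) i, h1]
  have hsurj : Function.Surjective f := by
    rintro ⟨v, hv⟩
    exact ⟨⟨fun _ => v, LinearMap.mem_ker.mpr (hkerC v ((hSmem v).mp hv))⟩, Subtype.ext rfl⟩
  refine ⟨LinearEquiv.ofBijective f ⟨hinj, hsurj⟩, ?_⟩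
  intro x i
  show x.1 i₀ = x.1 i
  exact (hconst x.1 (LinearMap.mem_ker.mp x.2) i).symm
end

section
/- For a finite connected graph η with SO(d)-voltage α, the voltage α is synchronizable (i.e., there exist ξ_i ∈ SO(d) with α_{ij} = ξ_i ξ_j⁻¹ on all edges) if and only if dim ker Δ_{η,κ,α} = d for any (equivalently, some) positive symmetric edge weights κ. -/
open Matrix

section Helpers

variable {ν : Type*} [Fintype ν] {d : ℕ}

private lemma dot_sum (v : Fin d → ℝ) (w : ν → Fin d → ℝ) :
    v ⬝ᵥ ∑ j, w j = ∑ j, v ⬝ᵥ w j := by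
  simp only [dotProduct, Finset.sum_apply, Finset.mul_sum]
  exact Finset.sum_comm

private lemma dot_self_nonneg (v : Fin d → ℝ) : 0 ≤ v ⬝ᵥ v :=
  Finset.sum_nonneg fun i _ => mul_self_nonneg _

private lemma orth_mulVec_dot (A : Matrix (Fin d) (Fin d) ℝ) (hA : A * Aᵀ = 1)
    (y : Fin d → ℝ) : A.mulVec y ⬝ᵥ A.mulVec y = y ⬝ᵥ y := by
  have h' : Aᵀ * A = 1 := mul_eq_one_comm.mp hA
  rw [Matrix.dotProduct_mulVec, ← Matrix.vecMul_transpose, Matrix.vecMul_vecMul,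
    h', Matrix.vecMul_one]

private lemma orth_cancel (A : Matrix (Fin d) (Fin d) ℝ) (hA : A * Aᵀ = 1)
    {y z : Fin d → ℝ} (h : A.mulVec y = z) : y = Aᵀ.mulVec z := by
  have h' : Aᵀ * A = 1 := mul_eq_one_comm.mp hA
  rw [← h, Matrix.mulVec_mulVec, h', Matrix.one_mulVec]

private lemma mulVec_ext {M N : Matrix (Fin d) (Fin d) ℝ}
    (h : ∀ v, M.mulVec v = N.mulVec v) : M = N := by
  ext r c
  have := congrFun (h (Pi.single c 1)) r
  simpa [Matrix.mulVec_single] using this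

/-- The kernel of the gauged Laplacian is exactly the set of "synchronized" fields. -/
private lemma ker_iff
    (G : SimpleGraph ν) (κ : ν → ν → ℝ)
    (hκsym : ∀ i j, κ i j = κ j i) (hκnn : ∀ i j, 0 ≤ κ i j)
    (hsupp : ∀ i j, 0 < κ i j ↔ G.Adj i j)
    (α : ν → ν → Matrix (Fin d) (Fin d) ℝ)
    (hortho : ∀ i j, α i j * (α i j)ᵀ = 1)
    (x : ν → Fin d → ℝ) :
    gaugedLapL d κ α x = 0 ↔ ∀ i j, G.Adj i j → (α i j).mulVec (x j) = x i := by
  have hκ0 : ∀ i j, ¬ G.Adj i j → κ i j = 0 := by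
    intro i j h
    rcases (hκnn i j).eq_or_lt with h0 | h0
    · exact h0.symm
    · exact absurd ((hsupp i j).mp h0) h
  constructor
  · intro hx
    -- Step 1: the unnormalized vector equations
    have hZ : ∀ i, ∑ j, κ i j • ((α i j).mulVec (x j) - x i) = (0 : Fin d → ℝ) := by
      intro i
      have h0 : ∑ j, (κ i j / ∑ k, κ i k) • ((α i j).mulVec (x j) - x i) = 0 := by
        have h1 := congrFun hx i
        simp only [gaugedLapL, LinearMap.coe_mk, AddHom.coe_mk, Pi.zero_apply,
          neg_eq_zero] at h1
        exact h1
      by_cases hZi : (∑ k, κ i k) = 0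
      · have hz : ∀ j, κ i j = 0 := fun j =>
          (Finset.sum_eq_zero_iff_of_nonneg (fun k _ => hκnn i k)).mp hZi j
            (Finset.mem_univ j)
        simp [hz]
      · calc ∑ j, κ i j • ((α i j).mulVec (x j) - x i)
            = (∑ k, κ i k) •
              ∑ j, (κ i j / ∑ k, κ i k) • ((α i j).mulVec (x j) - x i) := by
              rw [Finset.smul_sum]
              refine Finset.sum_congr rfl fun j _ => ?_
              rw [smul_smul]
              congr 1
              field_simp
          _ = 0 := by rw [h0, smul_zero]
    -- Step 2: scalar equations
    have hdot : ∀ i, ∑ j, κ i j * (x i ⬝ᵥ ((α i j).mulVec (x j) - x i)) = 0 := by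
      intro i
      have h1 := congrArg (fun v => x i ⬝ᵥ v) (hZ i)
      simp only [dot_sum, dotProduct_smul, smul_eq_mul,
        dotProduct_zero] at h1
      exact h1
    have hcross : ∀ i, ∑ j, κ i j * (x i ⬝ᵥ (α i j).mulVec (x j))
        = ∑ j, κ i j * (x i ⬝ᵥ x i) := by
      intro i
      have h1 := hdot i
      simp only [dotProduct_sub, mul_sub] at h1
      rw [Finset.sum_sub_distrib, sub_eq_zero] at h1
      exact h1
    -- Step 3: total energy is zero
    have hswap : ∑ i, ∑ j, κ i j * (x j ⬝ᵥ x j) = ∑ i, ∑ j, κ i j * (x i ⬝ᵥ x i) := by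
      rw [Finset.sum_comm]
      exact Finset.sum_congr rfl fun a _ => Finset.sum_congr rfl fun b _ => by
        rw [hκsym]
    have hS : ∑ i, ∑ j, κ i j *
        (((α i j).mulVec (x j) - x i) ⬝ᵥ ((α i j).mulVec (x j) - x i)) = 0 := by
      have key : ∀ i, ∑ j, κ i j *
          (((α i j).mulVec (x j) - x i) ⬝ᵥ ((α i j).mulVec (x j) - x i))
          = ∑ j, κ i j * (x j ⬝ᵥ x j) - ∑ j, κ i j * (x i ⬝ᵥ x i) := by
        intro i
        have e1 : ∀ j, κ i j *
            (((α i j).mulVec (x j) - x i) ⬝ᵥ ((α i j).mulVec (x j) - x i))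
            = κ i j * (x j ⬝ᵥ x j)
              - 2 * (κ i j * (x i ⬝ᵥ (α i j).mulVec (x j)))
              + κ i j * (x i ⬝ᵥ x i) := by
          intro j
          have ha := orth_mulVec_dot (α i j) (hortho i j) (x j)
          have hc : (α i j).mulVec (x j) ⬝ᵥ x i = x i ⬝ᵥ (α i j).mulVec (x j) :=
            dotProduct_comm _ _
          simp only [sub_dotProduct, dotProduct_sub, ha, hc]
          ring
        calc ∑ j, κ i j *
              (((α i j).mulVec (x j) - x i) ⬝ᵥ ((α i j).mulVec (x j) - x i))
            = ∑ j, (κ i j * (x j ⬝ᵥ x j)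
                - 2 * (κ i j * (x i ⬝ᵥ (α i j).mulVec (x j)))
                + κ i j * (x i ⬝ᵥ x i)) := Finset.sum_congr rfl fun j _ => e1 j
          _ = ∑ j, κ i j * (x j ⬝ᵥ x j)
                - 2 * ∑ j, (κ i j * (x i ⬝ᵥ (α i j).mulVec (x j)))
                + ∑ j, κ i j * (x i ⬝ᵥ x i) := by
              rw [Finset.sum_add_distrib, Finset.sum_sub_distrib, Finset.mul_sum]
          _ = ∑ j, κ i j * (x j ⬝ᵥ x j) - ∑ j, κ i j * (x i ⬝ᵥ x i) := by
              rw [hcross i]; ring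
      calc ∑ i, ∑ j, κ i j *
            (((α i j).mulVec (x j) - x i) ⬝ᵥ ((α i j).mulVec (x j) - x i))
          = ∑ i, (∑ j, κ i j * (x j ⬝ᵥ x j) - ∑ j, κ i j * (x i ⬝ᵥ x i)) :=
            Finset.sum_congr rfl fun i _ => key i
        _ = 0 := by rw [Finset.sum_sub_distrib, hswap, sub_self]
    -- Step 4: each term vanishes
    have hterm : ∀ i ∈ Finset.univ, ∀ j ∈ (Finset.univ : Finset ν),
        κ i j * (((α i j).mulVec (x j) - x i) ⬝ᵥ ((α i j).mulVec (x j) - x i)) = 0 := by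
      have houter := (Finset.sum_eq_zero_iff_of_nonneg (fun i _ =>
        Finset.sum_nonneg fun j _ =>
          mul_nonneg (hκnn i j) (dot_self_nonneg _))).mp hS
      intro i hi
      exact (Finset.sum_eq_zero_iff_of_nonneg (fun j _ =>
        mul_nonneg (hκnn i j) (dot_self_nonneg _))).mp (houter i hi)
    intro i j hij
    have hpos := (hsupp i j).mpr hij
    have h0 := hterm i (Finset.mem_univ i) j (Finset.mem_univ j)
    have h1 : (((α i j).mulVec (x j) - x i) ⬝ᵥ ((α i j).mulVec (x j) - x i)) = 0 := by
      rcases mul_eq_zero.mp h0 with h | h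
      · exact absurd h hpos.ne'
      · exact h
    have h2 : (α i j).mulVec (x j) - x i = 0 := dotProduct_self_eq_zero.mp h1
    exact sub_eq_zero.mp h2
  · intro hP
    funext i
    simp only [gaugedLapL, LinearMap.coe_mk, AddHom.coe_mk, Pi.zero_apply, neg_eq_zero]
    apply Finset.sum_eq_zero
    intro j _
    by_cases hij : G.Adj i j
    · rw [hP i j hij, sub_self, smul_zero]
    · rw [hκ0 i j hij, zero_div, zero_smul]

end Helpers


set_option synthInstance.maxHeartbeats 1000000 in
/-- For a finite connected graph with `SO(d)`-voltage `α` and positive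
symmetric edge weights `κ`, the voltage is synchronizable (`α_{ij} = ξ_i ξ_j⁻¹` on
edges for some `ξ_i ∈ SO(d)`) if and only if `dim ker Δ_{η,κ,α} = d`. -/
theorem stmt12 {ν : Type*} [Fintype ν] (d : ℕ)
    (G : SimpleGraph ν) (hconn : G.Connected)
    (κ : ν → ν → ℝ)
    (hκsym : ∀ i j, κ i j = κ j i)
    (hκnn : ∀ i j, 0 ≤ κ i j)
    (hsupp : ∀ i j, 0 < κ i j ↔ G.Adj i j)
    (α : ν → ν → Matrix (Fin d) (Fin d) ℝ)
    (hortho : ∀ i j, α i j * (α i j)ᵀ = 1)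
    (hdet : ∀ i j, (α i j).det = 1)
    (hinv : ∀ i j, α j i = (α i j)ᵀ) :
    (∃ ξ : ν → Matrix (Fin d) (Fin d) ℝ,
        (∀ i, ξ i * (ξ i)ᵀ = 1 ∧ (ξ i).det = 1) ∧
        ∀ i j, G.Adj i j → α i j = ξ i * (ξ j)⁻¹) ↔
      Module.finrank ℝ (LinearMap.ker (gaugedLapL d κ α)) = d := by
  obtain ⟨i₀⟩ := hconn.nonempty
  have horth' : ∀ i j, (α i j)ᵀ * α i j = 1 := fun i j =>
    mul_eq_one_comm.mp (hortho i j)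
  set K := LinearMap.ker (gaugedLapL d κ α) with hKdef
  have hmemK : ∀ x : ν → Fin d → ℝ,
      x ∈ K ↔ ∀ i j, G.Adj i j → (α i j).mulVec (x j) = x i := fun x =>
    (LinearMap.mem_ker).trans (ker_iff G κ hκsym hκnn hsupp α hortho x)
  let ev : K →ₗ[ℝ] (Fin d → ℝ) := (LinearMap.proj i₀).comp K.subtype
  have hev : ∀ x : K, ev x = (x : ν → Fin d → ℝ) i₀ := fun x => rfl
  have hinjev : Function.Injective ev := by
    refine (injective_iff_map_eq_zero ev).mpr fun x hx0 => ?_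
    have hx := (hmemK x).mp x.2
    have hzero : ∀ {u v : ν}, G.Walk u v →
        (x : ν → Fin d → ℝ) u = 0 → (x : ν → Fin d → ℝ) v = 0 := by
      intro u v w
      induction w with
      | nil => exact id
      | @cons a b c hab p ih =>
        intro h0
        apply ih
        have hb := orth_cancel (α a b) (hortho a b) (hx a b hab)
        rw [hb, h0, Matrix.mulVec_zero]
    apply Subtype.ext
    funext v
    obtain ⟨w⟩ := hconn.preconnected i₀ v
    have h0 : (x : ν → Fin d → ℝ) i₀ = 0 := by rw [← hev x, hx0]
    exact hzero w h0
  constructor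
  · rintro ⟨ξ, hξSO, hξedge⟩
    have hξinv : ∀ i, (ξ i)⁻¹ = (ξ i)ᵀ := fun i =>
      Matrix.inv_eq_right_inv (hξSO i).1
    have hξ' : ∀ i, (ξ i)ᵀ * ξ i = 1 := fun i =>
      mul_eq_one_comm.mp (hξSO i).1
    have hmem : ∀ v : Fin d → ℝ,
        (fun i => (ξ i * (ξ i₀)ᵀ).mulVec v) ∈ K := by
      intro v
      rw [hmemK]
      intro i j hij
      rw [Matrix.mulVec_mulVec, ← Matrix.mul_assoc, hξedge i j hij, hξinv j,
        Matrix.mul_assoc (ξ i), hξ' j, Matrix.mul_one]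
    have hsurjev : Function.Surjective ev := by
      intro v
      refine ⟨⟨fun i => (ξ i * (ξ i₀)ᵀ).mulVec v, hmem v⟩, ?_⟩
      show (ξ i₀ * (ξ i₀)ᵀ).mulVec v = v
      rw [(hξSO i₀).1, Matrix.one_mulVec]
    have e := LinearEquiv.ofBijective ev ⟨hinjev, hsurjev⟩
    rw [e.finrank_eq, Module.finrank_fin_fun]
  · intro hrank
    have hsurjev : Function.Surjective ev :=
      (LinearMap.injective_iff_surjective_of_finrank_eq_finrank
        (by rw [hrank, Module.finrank_fin_fun])).mp hinjev
    let e := LinearEquiv.ofBijective ev ⟨hinjev, hsurjev⟩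
    let ξ : ν → Matrix (Fin d) (Fin d) ℝ := fun i =>
      Matrix.of fun r c => ((e.symm (Pi.single c 1) : K) : ν → Fin d → ℝ) i r
    have key : ∀ (v : Fin d → ℝ) (i : ν),
        (ξ i).mulVec v = ((e.symm v : K) : ν → Fin d → ℝ) i := by
      intro v i
      have hv : v = ∑ c, v c • (Pi.single c 1 : Fin d → ℝ) := by
        funext r
        simp [Pi.single_apply]
      have hsum : e.symm v = ∑ c, v c • e.symm (Pi.single c 1) := by
        conv_lhs => rw [hv]
        rw [map_sum]
        exact Finset.sum_congr rfl fun c _ => _root_.map_smul e.symm _ _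
      rw [hsum]
      funext r
      simp only [ξ, Matrix.mulVec, dotProduct, Matrix.of_apply,
        AddSubmonoidClass.coe_finset_sum, Finset.sum_apply, SetLike.val_smul,
        Pi.smul_apply, smul_eq_mul]
      exact Finset.sum_congr rfl fun c _ => mul_comm _ _
    have hξi₀ : ξ i₀ = 1 := by
      ext r c
      have h1 : ev (e.symm (Pi.single c 1)) = Pi.single c 1 := by
        have := e.apply_symm_apply (Pi.single c 1)
        exact this
      have h2 : ((e.symm (Pi.single c 1) : K) : ν → Fin d → ℝ) i₀ = Pi.single c 1 := by
        rw [← hev]; exact h1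
      show ((e.symm (Pi.single c 1) : K) : ν → Fin d → ℝ) i₀ r = (1 : Matrix _ _ ℝ) r c
      rw [h2, Matrix.one_apply, Pi.single_apply]
    have hedge : ∀ i j, G.Adj i j → α i j * ξ j = ξ i := by
      intro i j hij
      apply mulVec_ext
      intro v
      rw [← Matrix.mulVec_mulVec, key v j, key v i]
      exact (hmemK _).mp (e.symm v).2 i j hij
    have hstep : ∀ a b, G.Adj a b → ξ b = (α a b)ᵀ * ξ a := by
      intro a b hab
      calc ξ b = (α a b)ᵀ * (α a b * ξ b) := by
            rw [← Matrix.mul_assoc, horth' a b, Matrix.one_mul]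
        _ = (α a b)ᵀ * ξ a := by rw [hedge a b hab]
    have hSO : ∀ v, ξ v * (ξ v)ᵀ = 1 ∧ (ξ v).det = 1 := by
      have H : ∀ {u vv : ν}, G.Walk u vv →
          (ξ u * (ξ u)ᵀ = 1 ∧ (ξ u).det = 1) →
          (ξ vv * (ξ vv)ᵀ = 1 ∧ (ξ vv).det = 1) := by
        intro u vv w
        induction w with
        | nil => exact id
        | @cons a b c hab p ih =>
          intro hQ
          apply ih
          have hb := hstep a b hab
          constructor
          · rw [hb, Matrix.transpose_mul, Matrix.transpose_transpose,
              Matrix.mul_assoc, ← Matrix.mul_assoc (ξ a), hQ.1, Matrix.one_mul,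
              horth' a b]
          · rw [hb, Matrix.det_mul, Matrix.det_transpose, hdet a b, hQ.2, mul_one]
      intro v
      obtain ⟨w⟩ := hconn.preconnected i₀ v
      exact H w (by rw [hξi₀]; simp)
    refine ⟨ξ, hSO, fun i j hij => ?_⟩
    have hj := (hSO j).1
    rw [Matrix.inv_eq_right_inv hj, ← hedge i j hij, Matrix.mul_assoc, hj,
      Matrix.mul_one]
end
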